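/- Let $g(x) = \beta \exp\{\alpha' x\} + \sum_{j=1}^\ell c_j \exp\{[Q'x]_j\}$ with $\bc \in \R^\ell_+$ (strictly positive entries suffice), $\beta \in \R$, $Q \in \R^{n\times\ell}$, $\alpha \in \R^n$. If $g(x) \ge 0$ for all $x \in \R^n$, then there exists $\nu \in \R^\ell_+$ satisfying $D(\nu, e\bc) \le \beta$ and $Q\nu = (\mathbf{1}'\nu)\alpha$. -/

import Mathlib

open Matrix Finset Filter


lemma key {n ℓ : ℕ} (c : Fin ℓ → ℝ) (T : (Fin n → ℝ) →ₗ[ℝ] (Fin ℓ → ℝ)) :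
    ∀ (J : Finset (Fin ℓ)), (∀ j ∈ J, 0 < c j) → ∀ (L : ℝ),
    (∀ x, L ≤ ∑ j ∈ J, c j * Real.exp (T x j)) →
    ∃ ν : Fin ℓ → ℝ, (∀ j, 0 ≤ ν j) ∧ (∀ j, j ∉ J → ν j = 0) ∧
      (∀ x, ∑ j, ν j * T x j = 0) ∧
      ∑ j ∈ J, ν j * (Real.log (ν j / c j) - 1) ≤ -L := by
  intro J
  induction J using Finset.strongInduction with
  | _ J IH =>
  intro hJ L hL
  by_cases hA : ∃ x₀, (∀ j ∈ J, T x₀ j ≤ 0) ∧ (∃ j₀ ∈ J, T x₀ j₀ < 0)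
  · -- Case A : recession direction, shrink support
    obtain ⟨x₀, hle, j₀, hj₀J, hj₀⟩ := hA
    set J' := J.filter (fun j => T x₀ j = 0) with hJ'def
    have hss : J' ⊂ J := by
      refine (Finset.ssubset_iff_of_subset (Finset.filter_subset _ _)).mpr ⟨j₀, hj₀J, ?_⟩
      simp [hJ'def, hj₀.ne]
    have hL' : ∀ x, L ≤ ∑ j ∈ J', c j * Real.exp (T x j) := by
      intro x
      have htend : Tendsto (fun t : ℝ => ∑ j ∈ J, c j * Real.exp (T x j + t * T x₀ j))
          atTop (nhds (∑ j ∈ J, if T x₀ j = 0 then c j * Real.exp (T x j) else 0)) := by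
        refine tendsto_finset_sum _ (fun j hj => ?_)
        by_cases h0 : T x₀ j = 0
        · simp only [h0, mul_zero, add_zero, if_pos]
          exact tendsto_const_nhds
        · rw [if_neg h0]
          have hneg : T x₀ j < 0 := lt_of_le_of_ne (hle j hj) h0
          have h1 : Tendsto (fun t : ℝ => T x j + t * T x₀ j) atTop atBot :=
            tendsto_atBot_add_const_left _ _ (tendsto_id.atTop_mul_const_of_neg hneg)
          have h2 := (Real.tendsto_exp_atBot.comp h1).const_mul (c j)
          simpa using h2
      have hsum : (∑ j ∈ J, if T x₀ j = 0 then c j * Real.exp (T x j) else 0)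
          = ∑ j ∈ J', c j * Real.exp (T x j) := (Finset.sum_filter _ _).symm
      rw [← hsum]
      refine ge_of_tendsto htend (Filter.Eventually.of_forall (fun t => ?_))
      have heq : ∀ j, T (x + t • x₀) j = T x j + t * T x₀ j := by
        intro j; simp [T.map_add, T.map_smul]
      simp only [← heq]
      exact hL _
    obtain ⟨ν, h1, h2, h3, h4⟩ := IH J' hss
      (fun j hj => hJ j (Finset.mem_of_mem_filter j hj)) L hL'
    refine ⟨ν, h1, fun j hj => h2 j (fun hj' => hj (hss.1 hj')), h3, ?_⟩
    calc ∑ j ∈ J, ν j * (Real.log (ν j / c j) - 1)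
        = ∑ j ∈ J', ν j * (Real.log (ν j / c j) - 1) :=
          (Finset.sum_subset hss.1 (fun j _ hj' => by rw [h2 j hj', zero_mul])).symm
      _ ≤ -L := h4
  · -- Case B : no recession direction, infimum attained
    push_neg at hA
    rcases J.eq_empty_or_nonempty with hJe | hJne
    · subst hJe
      refine ⟨0, fun j => le_refl 0, fun j _ => rfl, fun x => by simp, ?_⟩
      have := hL 0
      simp only [Finset.sum_empty] at this ⊢
      linarith
    set M := ∑ j ∈ J, c j with hM
    set Tp : (Fin n → ℝ) →ₗ[ℝ] (Fin ℓ → ℝ) :=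
      { toFun := fun x j => if j ∈ J then T x j else 0
        map_add' := by intro a b; funext j; by_cases h : j ∈ J <;> simp [h]
        map_smul' := by intro m a; funext j; by_cases h : j ∈ J <;> simp [h] } with hTp
    have hTpapp : ∀ x j, Tp x j = if j ∈ J then T x j else 0 := fun _ _ => rfl
    set S : Submodule ℝ (Fin ℓ → ℝ) := LinearMap.range Tp with hS
    have hSclosed : IsClosed (S : Set (Fin ℓ → ℝ)) := S.closed_of_finiteDimensional
    set F : (Fin ℓ → ℝ) → ℝ := fun w => ∑ j ∈ J, c j * Real.exp (w j) with hF
    have hFcont : Continuous F :=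
      continuous_finset_sum _
        (fun j _ => continuous_const.mul (Real.continuous_exp.comp (continuous_apply j)))
    set C : Set (Fin ℓ → ℝ) := (S : Set _) ∩ F ⁻¹' Set.Iic M with hC
    have hCclosed : IsClosed C := hSclosed.inter (isClosed_Iic.preimage hFcont)
    have hF0 : F 0 = M := by simp [hF, hM]
    have h0C : (0 : Fin ℓ → ℝ) ∈ C := ⟨S.zero_mem, by simp [Set.mem_preimage, hF0]⟩
    have hCbdd : Bornology.IsBounded C := by
      by_contra hub
      rw [isBounded_iff_forall_norm_le] at hub
      push_neg at hub
      choose w hwC hwn using fun k : ℕ => hub (k : ℝ)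
      have hwpos : ∀ k, 0 < ‖w k‖ := fun k => lt_of_le_of_lt (Nat.cast_nonneg k) (hwn k)
      set d : ℕ → (Fin ℓ → ℝ) := fun k => ‖w k‖⁻¹ • w k with hd
      have hdS : ∀ k, d k ∈ S := fun k => S.smul_mem _ (hwC k).1
      have hdsph : ∀ k, d k ∈ Metric.sphere (0 : Fin ℓ → ℝ) 1 := by
        intro k
        rw [mem_sphere_zero_iff_norm, hd, norm_smul, norm_inv, norm_norm]
        exact inv_mul_cancel₀ (hwpos k).ne'
      obtain ⟨a, hasph, φ, hφ, htend⟩ :=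
        (isCompact_sphere (0 : Fin ℓ → ℝ) 1).tendsto_subseq hdsph
      have haS : a ∈ S :=
        hSclosed.mem_of_tendsto htend (Filter.Eventually.of_forall (fun k => hdS _))
      have hwb : ∀ k, ∀ j ∈ J, w k j ≤ Real.log (M / c j) := by
        intro k j hj
        have hcj := hJ j hj
        have hterm : c j * Real.exp (w k j) ≤ M := by
          refine le_trans ?_ (hwC k).2
          exact Finset.single_le_sum
            (fun i hi => mul_nonneg (hJ i hi).le (Real.exp_nonneg _)) hj
        have hle' : Real.exp (w k j) ≤ M / c j := (le_div_iff₀ hcj).mpr (by linarith [hterm])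
        calc w k j = Real.log (Real.exp (w k j)) := (Real.log_exp _).symm
          _ ≤ Real.log (M / c j) := Real.log_le_log (Real.exp_pos _) hle'
      have hnormtend : Tendsto (fun k => ‖w (φ k)‖) atTop atTop := by
        refine tendsto_atTop_mono (fun k => ?_) tendsto_natCast_atTop_atTop
        exact le_trans (Nat.cast_le.mpr hφ.le_apply) (hwn (φ k)).le
      have haj : ∀ j ∈ J, a j ≤ 0 := by
        intro j hj
        have h1 : Tendsto (fun k => (d ∘ φ) k j) atTop (nhds (a j)) :=
          ((continuous_apply j).continuousAt.tendsto).comp htend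
        have h2 : Tendsto (fun k => ‖w (φ k)‖⁻¹ * Real.log (M / c j)) atTop (nhds 0) := by
          simpa using (tendsto_inv_atTop_zero.comp hnormtend).mul_const (Real.log (M / c j))
        refine le_of_tendsto_of_tendsto h1 h2 (Filter.Eventually.of_forall (fun k => ?_))
        show (d ∘ φ) k j ≤ _
        simp only [Function.comp, hd, Pi.smul_apply, smul_eq_mul]
        exact mul_le_mul_of_nonneg_left (hwb (φ k) j hj) (inv_pos.mpr (hwpos _)).le
      obtain ⟨xa, hxa⟩ := haS
      have ha0 : a = 0 := by
        funext j
        rw [← hxa, hTpapp]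
        by_cases hj : j ∈ J
        · rw [if_pos hj]
          have h1 : T xa j ≤ 0 := by
            have := congrFun hxa j
            rw [hTpapp, if_pos hj] at this
            rw [this]; exact haj j hj
          have hTxa : ∀ i ∈ J, T xa i ≤ 0 := by
            intro i hi
            have := congrFun hxa i
            rw [hTpapp, if_pos hi] at this
            rw [this]; exact haj i hi
          have h2 : 0 ≤ T xa j := hA xa hTxa j hj
          simp only [Pi.zero_apply]
          exact le_antisymm h1 h2
        · rw [if_neg hj]; simp
      rw [ha0] at hasph
      simp at hasph
    have hCcpt : IsCompact C := Metric.isCompact_of_isClosed_isBounded hCclosed hCbdd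
    obtain ⟨w₀, hw₀C, hmin⟩ := hCcpt.exists_isMinOn ⟨0, h0C⟩ hFcont.continuousOn
    have hminS : ∀ w ∈ S, F w₀ ≤ F w := by
      intro w hw
      by_cases hwM : F w ≤ M
      · exact isMinOn_iff.mp hmin w ⟨hw, hwM⟩
      · refine le_trans (le_trans (isMinOn_iff.mp hmin 0 h0C) hF0.le) (le_of_not_ge hwM)
    obtain ⟨x₁, hx₁⟩ := hw₀C.1
    set ν : Fin ℓ → ℝ := fun j => if j ∈ J then c j * Real.exp (T x₁ j) else 0 with hν
    have hνapp : ∀ j, ν j = if j ∈ J then c j * Real.exp (T x₁ j) else 0 := fun _ => rfl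
    have hν0 : ∀ j, 0 ≤ ν j := by
      intro j
      rw [hνapp]
      by_cases hj : j ∈ J
      · rw [if_pos hj]; exact mul_nonneg (hJ j hj).le (Real.exp_nonneg _)
      · rw [if_neg hj]
    have hφmin : ∀ x : Fin n → ℝ, ∑ j ∈ J, c j * Real.exp (T x₁ j) * T x j = 0 := by
      intro x
      set ψ : ℝ → ℝ := fun t => ∑ j ∈ J, c j * Real.exp (T x₁ j + t * T x j) with hψ
      have hψval : ∀ t, ψ t = F (Tp (x₁ + t • x)) := by
        intro t
        simp only [hψ, hF]
        refine Finset.sum_congr rfl (fun j hj => ?_)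
        rw [hTpapp, if_pos hj, T.map_add, T.map_smul]
        simp [smul_eq_mul]
      have hψ0 : ψ 0 = F w₀ := by rw [hψval]; simp [hx₁]
      have hmin' : IsLocalMin ψ 0 := by
        refine Filter.Eventually.of_forall (fun t => ?_)
        rw [hψ0, hψval]
        exact hminS _ (LinearMap.mem_range_self Tp _)
      have hder : HasDerivAt ψ (∑ j ∈ J, c j * Real.exp (T x₁ j) * T x j) 0 := by
        refine HasDerivAt.fun_sum (fun j hj => ?_)
        have h1 : HasDerivAt (fun t : ℝ => T x₁ j + t * T x j) (T x j) 0 := by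
          simpa using (((hasDerivAt_id (0:ℝ)).mul_const (T x j)).const_add (T x₁ j))
        have h2 := (h1.exp).const_mul (c j)
        convert h2 using 1
        · rfl
        simp [mul_assoc]
      exact hmin'.hasDerivAt_eq_zero hder
    have horth : ∀ x, ∑ j, ν j * T x j = 0 := by
      intro x
      have e1 : ∑ j, ν j * T x j
          = ∑ j, if j ∈ J then c j * Real.exp (T x₁ j) * T x j else 0 := by
        refine Finset.sum_congr rfl (fun j _ => ?_)
        rw [hνapp]
        by_cases hj : j ∈ J
        · rw [if_pos hj, if_pos hj]
        · rw [if_neg hj, if_neg hj, zero_mul]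
      rw [e1, Finset.sum_ite_mem, Finset.univ_inter]
      exact hφmin x
    refine ⟨ν, hν0, fun j hj => by rw [hνapp, if_neg hj], horth, ?_⟩
    have hent : ∑ j ∈ J, ν j * (Real.log (ν j / c j) - 1)
        = ∑ j ∈ J, (c j * Real.exp (T x₁ j) * T x₁ j - c j * Real.exp (T x₁ j)) := by
      refine Finset.sum_congr rfl (fun j hj => ?_)
      have hcj := hJ j hj
      rw [hνapp, if_pos hj]
      have hdiv : c j * Real.exp (T x₁ j) / c j = Real.exp (T x₁ j) := by
        field_simp
      rw [hdiv, Real.log_exp]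
      ring
    rw [hent, Finset.sum_sub_distrib, hφmin x₁]
    have hLx := hL x₁
    have hFw : ∑ j ∈ J, c j * Real.exp (T x₁ j) = F w₀ := by
      rw [← hx₁, hF]
      refine Finset.sum_congr rfl (fun j hj => ?_)
      rw [hTpapp, if_pos hj]
    linarith

lemma ereal_coe_sum {ι : Type*} [DecidableEq ι] (s : Finset ι) (f : ι → ℝ) :
    ((∑ j ∈ s, f j : ℝ) : EReal) = ∑ j ∈ s, ((f j : ℝ) : EReal) := by
  induction s using Finset.induction with
  | empty => simp
  | insert h ih => simp_all [EReal.coe_add]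

noncomputable def relEnt {ℓ : ℕ} (ν lam : Fin ℓ → ℝ) : EReal :=
  ∑ j, if ν j = 0 then (0 : EReal) else if lam j = 0 then (⊤ : EReal)
    else ((ν j * Real.log (ν j / lam j) : ℝ) : EReal)

theorem stmt1 {n ℓ : ℕ} (c : Fin ℓ → ℝ) (hc : ∀ j, 0 ≤ c j) (β : ℝ)
    (Q : Matrix (Fin n) (Fin ℓ) ℝ) (α : Fin n → ℝ)
    (hg : ∀ x : Fin n → ℝ,
      0 ≤ β * Real.exp (α ⬝ᵥ x) + ∑ j, c j * Real.exp (Qᵀ.mulVec x j)) :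
    ∃ ν : Fin ℓ → ℝ, (∀ j, 0 ≤ ν j) ∧
      relEnt ν (fun j => Real.exp 1 * c j) ≤ (β : EReal) ∧
      Q.mulVec ν = (∑ j, ν j) • α := by
  set T : (Fin n → ℝ) →ₗ[ℝ] (Fin ℓ → ℝ) :=
    { toFun := fun x j => Qᵀ.mulVec x j - α ⬝ᵥ x
      map_add' := by
        intro a b; funext j
        simp [Matrix.mulVec_add, dotProduct_add]; ring
      map_smul' := by
        intro m a; funext j
        simp [Matrix.mulVec_smul, dotProduct_smul, smul_eq_mul]; ring } with hTdef
  have hT : ∀ x j, T x j = Qᵀ.mulVec x j - α ⬝ᵥ x := fun _ _ => rfl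
  set J : Finset (Fin ℓ) := Finset.univ.filter (fun j => 0 < c j) with hJdef
  have hJ : ∀ j ∈ J, 0 < c j := fun j hj => (Finset.mem_filter.mp hj).2
  have hL : ∀ x, -β ≤ ∑ j ∈ J, c j * Real.exp (T x j) := by
    intro x
    have e1 : ∑ j ∈ J, c j * Real.exp (T x j)
        = (∑ j, c j * Real.exp (Qᵀ.mulVec x j)) * (Real.exp (α ⬝ᵥ x))⁻¹ := by
      rw [Finset.sum_mul, hJdef, Finset.sum_filter]
      refine Finset.sum_congr rfl (fun j _ => ?_)
      by_cases hj : 0 < c j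
      · rw [if_pos hj, hT, Real.exp_sub, div_eq_mul_inv, ← mul_assoc]
      · rw [if_neg hj, le_antisymm (not_lt.mp hj) (hc j)]
        simp
    have e2 : -β * Real.exp (α ⬝ᵥ x) ≤ ∑ j, c j * Real.exp (Qᵀ.mulVec x j) := by
      linarith [hg x]
    rw [e1]
    calc -β = (-β * Real.exp (α ⬝ᵥ x)) * (Real.exp (α ⬝ᵥ x))⁻¹ := by
          field_simp
      _ ≤ _ := mul_le_mul_of_nonneg_right e2 (inv_nonneg.mpr (Real.exp_pos _).le)
  obtain ⟨ν, hν0, hsupp, horth, hbound⟩ := key c T J hJ (-β) hL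
  refine ⟨ν, hν0, ?_, ?_⟩
  · -- relative entropy bound
    have hrel : relEnt ν (fun j => Real.exp 1 * c j)
        = ((∑ j ∈ J, ν j * (Real.log (ν j / c j) - 1) : ℝ) : EReal) := by
      rw [relEnt]
      have hterm : ∀ j ∈ Finset.univ, (if ν j = 0 then (0 : EReal)
          else if (fun j => Real.exp 1 * c j) j = 0 then (⊤ : EReal)
          else ((ν j * Real.log (ν j / ((fun j => Real.exp 1 * c j) j)) : ℝ) : EReal))
          = (((if j ∈ J then ν j * (Real.log (ν j / c j) - 1) else 0) : ℝ) : EReal) := by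
        intro j _
        by_cases h0 : ν j = 0
        · rw [if_pos h0]
          by_cases hj : j ∈ J <;> simp [h0, hj]
        · have hjJ : j ∈ J := by
            by_contra hjn; exact h0 (hsupp j hjn)
          have hcj : 0 < c j := hJ j hjJ
          have hνj : 0 < ν j := lt_of_le_of_ne (hν0 j) (Ne.symm h0)
          rw [if_neg h0, if_neg (mul_pos (Real.exp_pos 1) hcj).ne', if_pos hjJ]
          norm_cast
          rw [Real.log_div h0 (mul_pos (Real.exp_pos 1) hcj).ne',
            Real.log_mul (Real.exp_ne_zero 1) hcj.ne', Real.log_exp,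
            Real.log_div h0 hcj.ne']
          ring
      rw [Finset.sum_congr rfl hterm]
      rw [← ereal_coe_sum]
      congr 1
      rw [Finset.sum_ite_mem, Finset.univ_inter]
    rw [hrel]
    exact_mod_cast (by linarith : (∑ j ∈ J, ν j * (Real.log (ν j / c j) - 1) : ℝ) ≤ β)
  · -- linear constraint
    funext i
    have h := horth (Pi.single i 1)
    have h1 : ∀ j, T (Pi.single i 1) j = Q i j - α i := by
      intro j
      rw [hT, Matrix.mulVec_single, dotProduct_single]
      simp [Matrix.transpose_apply]
    simp_rw [h1] at h
    have expand : ∑ j, ν j * (Q i j - α i)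
        = (∑ j, Q i j * ν j) - (∑ j, ν j) * α i := by
      rw [Finset.sum_mul, ← Finset.sum_sub_distrib]
      exact Finset.sum_congr rfl (fun j _ => by ring)
    rw [expand] at h
    simp only [Matrix.mulVec, dotProduct, Pi.smul_apply, smul_eq_mul]
    linarith
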